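/- Let 1 ≤ k1 ≤ n1, 1 ≤ k2 ≤ n2, n1·n2 ≤ m, and n1 − k1 ≤ n2 − k2. Let g1 ∈ L^{n1} with wt_R(g1) = n1 and g2 ∈ L^{n2} with wt_R(g2) = n2, and set G1 = Moore(g1, k1) and G2 = Moore(g2, k2). Then every nonzero codeword of the row space of G1 ⊗ G2 has rank weight at least n2 − k2 + 1, and there exists a nonzero codeword of the row space of G1 ⊗ G2 with rank weight at most (n1 − k1 + 1)·(n2 − k2 + 1). -/

import Mathlib

open Matrix Kronecker

/-- Rank weight of a vector over the extension `L` of the base field `K`. -/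
noncomputable def rankWeight (K : Type*) {L : Type*} [Field K] [Field L] [Algebra K L]
    {ι : Type*} (v : ι → L) : ℕ :=
  Module.finrank K (Submodule.span K (Set.range v))

/-- The `k × n` Moore matrix of `g`: entry `(i, j)` is `g j ^ q ^ i`. -/
def moore (q : ℕ) {L : Type*} [Field L] {n : ℕ} (g : Fin n → L) (k : ℕ) :
    Matrix (Fin k) (Fin n) L :=
  Matrix.of fun i j => g j ^ q ^ (i : ℕ)

section aux

set_option linter.unusedSectionVars false

variable {K L : Type*} [Field K] [Fintype K] [Field L] [Algebra K L]

lemma frob_add (a b : L) (i : ℕ) :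
    (a + b) ^ Fintype.card K ^ i = a ^ Fintype.card K ^ i + b ^ Fintype.card K ^ i := by
  obtain ⟨p, hp⟩ := CharP.exists K
  obtain ⟨n, hpp, hcard⟩ := FiniteField.card K p
  haveI : CharP L p := charP_of_injective_algebraMap (algebraMap K L).injective p
  haveI := Fact.mk hpp
  rw [hcard, ← pow_mul, add_pow_char_pow]

lemma frob_algebraMap (c : K) (i : ℕ) :
    (algebraMap K L c) ^ Fintype.card K ^ i = algebraMap K L c := by
  rw [← map_pow, FiniteField.pow_card_pow]

lemma frob_smul (c : K) (a : L) (i : ℕ) :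
    (c • a) ^ Fintype.card K ^ i = c • a ^ Fintype.card K ^ i := by
  rw [Algebra.smul_def, Algebra.smul_def, mul_pow, frob_algebraMap]

/-- The `K`-linear map `a ↦ ∑ i, x i * a ^ q ^ i` on `L`. -/
noncomputable def qLin {k : ℕ} (x : Fin k → L) : L →ₗ[K] L where
  toFun a := ∑ i : Fin k, x i * a ^ Fintype.card K ^ (i : ℕ)
  map_add' a b := by
    simp only [frob_add, mul_add, Finset.sum_add_distrib]
  map_smul' c a := by
    simp only [Algebra.smul_def, mul_pow, frob_algebraMap, RingHom.id_apply, Finset.mul_sum]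
    exact Finset.sum_congr rfl fun i _ => by ring

@[simp] lemma qLin_apply {k : ℕ} (x : Fin k → L) (a : L) :
    qLin (K := K) x a = ∑ i : Fin k, x i * a ^ Fintype.card K ^ (i : ℕ) := rfl

lemma qLin_ker_finrank [FiniteDimensional K L] {k : ℕ} (x : Fin k → L) (hx : x ≠ 0) :
    Module.finrank K (LinearMap.ker (qLin (K := K) x)) ≤ k - 1 := by
  classical
  have hq2 : 1 < Fintype.card K := Fintype.one_lt_card
  obtain ⟨i0, hi0'⟩ := Function.ne_iff.1 hx
  have hi0 : x i0 ≠ 0 := by simpa using hi0'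
  have hk : 1 ≤ k := Nat.one_le_iff_ne_zero.2 (by rintro rfl; exact i0.elim0)
  set P : Polynomial L := ∑ i : Fin k, Polynomial.C (x i) * Polynomial.X ^ (Fintype.card K ^ (i : ℕ)) with hP
  have hcoeff : P.coeff (Fintype.card K ^ (i0 : ℕ)) = x i0 := by
    rw [hP, Polynomial.finset_sum_coeff]
    rw [Finset.sum_eq_single i0]
    · simp
    · intro i _ hne
      have : Fintype.card K ^ (i : ℕ) ≠ Fintype.card K ^ (i0 : ℕ) := fun h =>
        hne (Fin.ext (Nat.pow_right_injective hq2 h))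
      rw [Polynomial.coeff_C_mul, Polynomial.coeff_X_pow, if_neg (fun h => this h.symm)]
      exact mul_zero _
    · intro h; exact absurd (Finset.mem_univ i0) h
  have hP0 : P ≠ 0 := fun h => hi0 (by rw [← hcoeff, h, Polynomial.coeff_zero])
  have hdeg : P.natDegree ≤ Fintype.card K ^ (k - 1) := by
    refine (Polynomial.natDegree_sum_le _ _).trans ?_
    rw [Finset.fold_max_le]
    refine ⟨Nat.zero_le _, fun i _ => ?_⟩
    refine (Polynomial.natDegree_C_mul_le _ _).trans ?_
    refine (Polynomial.natDegree_X_pow_le _).trans ?_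
    exact Nat.pow_le_pow_right (le_of_lt hq2) (by omega)
  haveI : Finite L := Module.finite_of_finite K
  haveI : Fintype L := Fintype.ofFinite L
  have hsub : (LinearMap.ker (qLin (K := K) x) : Set L).toFinset ⊆ P.roots.toFinset := by
    intro a ha
    simp only [Set.mem_toFinset, SetLike.mem_coe, LinearMap.mem_ker] at ha
    rw [Multiset.mem_toFinset, Polynomial.mem_roots hP0]
    rw [Polynomial.IsRoot, hP, Polynomial.eval_finset_sum]
    simpa using ha
  have hcard : Fintype.card (LinearMap.ker (qLin (K := K) x)) ≤ Fintype.card K ^ (k - 1) := by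
    calc Fintype.card (LinearMap.ker (qLin (K := K) x))
        = (LinearMap.ker (qLin (K := K) x) : Set L).toFinset.card := (Set.toFinset_card _).symm
      _ ≤ P.roots.toFinset.card := Finset.card_le_card hsub
      _ ≤ Multiset.card P.roots := Multiset.toFinset_card_le _
      _ ≤ P.natDegree := Polynomial.card_roots' P
      _ ≤ _ := hdeg
  rw [Module.card_eq_pow_finrank (K := K)] at hcard
  exact (Nat.pow_le_pow_iff_right hq2).1 hcard

lemma qLin_exists_ne_zero [FiniteDimensional K L] {k : ℕ} (x : Fin k → L) (hx : x ≠ 0)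
    (V : Submodule K L) (hV : k ≤ Module.finrank K V) :
    ∃ a ∈ V, qLin (K := K) x a ≠ 0 := by
  by_contra h
  push_neg at h
  have hle : V ≤ LinearMap.ker (qLin (K := K) x) := fun a ha => LinearMap.mem_ker.2 (h a ha)
  have h1 := Submodule.finrank_mono hle
  have h2 := qLin_ker_finrank (K := K) x hx
  have hk : 1 ≤ k := Nat.one_le_iff_ne_zero.2 (by rintro rfl; exact hx (funext fun i => i.elim0))
  omega

lemma qLin_map_finrank [FiniteDimensional K L] {k : ℕ} (x : Fin k → L) (hx : x ≠ 0)
    (V : Submodule K L) :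
    Module.finrank K V - (k - 1) ≤ Module.finrank K (V.map (qLin (K := K) x)) := by
  have h1 := LinearMap.finrank_range_add_finrank_ker ((qLin (K := K) x).domRestrict V)
  rw [LinearMap.range_domRestrict] at h1
  have h2 : Module.finrank K (LinearMap.ker ((qLin (K := K) x).domRestrict V)) ≤ k - 1 := by
    have hmap : (LinearMap.ker ((qLin (K := K) x).domRestrict V)).map V.subtype
        ≤ LinearMap.ker (qLin (K := K) x) := by
      rintro a ⟨b, hb, rfl⟩
      simpa using hb
    calc Module.finrank K (LinearMap.ker ((qLin (K := K) x).domRestrict V))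
        = Module.finrank K ((LinearMap.ker ((qLin (K := K) x).domRestrict V)).map V.subtype) :=
          (Submodule.finrank_map_subtype_eq _ _).symm
      _ ≤ Module.finrank K (LinearMap.ker (qLin (K := K) x)) := Submodule.finrank_mono hmap
      _ ≤ k - 1 := qLin_ker_finrank (K := K) x hx
  omega

lemma vecMul_moore {n k : ℕ} (g : Fin n → L) (x : Fin k → L) (j : Fin n) (q : ℕ) :
    (x ᵥ* moore q g k) j = ∑ i : Fin k, x i * g j ^ q ^ (i : ℕ) := by
  simp [Matrix.vecMul, dotProduct, moore]

lemma vecMul_kron {n1 k1 n2 k2 : ℕ} (g1 : Fin n1 → L) (g2 : Fin n2 → L)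
    (x : Fin k1 × Fin k2 → L) (j1 : Fin n1) (j2 : Fin n2) (q : ℕ) :
    (x ᵥ* (moore q g1 k1 ⊗ₖ moore q g2 k2)) (j1, j2)
      = ∑ i1 : Fin k1, ∑ i2 : Fin k2,
          x (i1, i2) * (g1 j1 ^ q ^ (i1 : ℕ) * g2 j2 ^ q ^ (i2 : ℕ)) := by
  simp [Matrix.vecMul, dotProduct, moore, Matrix.kroneckerMap_apply,
    Fintype.sum_prod_type]

lemma moore_exists_low_weight {n k : ℕ} (hk : 1 ≤ k) (hkn : k ≤ n) (g : Fin n → L) :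
    ∃ x : Fin k → L, x ≠ 0 ∧
      (∀ j : Fin n, (j : ℕ) < k - 1 → (x ᵥ* moore (Fintype.card K) g k) j = 0) := by
  classical
  have hle : k - 1 ≤ n := by omega
  set φ : (Fin k → L) →ₗ[L] (Fin (k - 1) → L) :=
    { toFun := fun x j => ∑ i : Fin k, x i * g (Fin.castLE hle j) ^ (Fintype.card K) ^ (i : ℕ)
      map_add' := by
        intro a b; funext j; simp [add_mul, Finset.sum_add_distrib]
      map_smul' := by
        intro c a; funext j
        simp [Finset.mul_sum, smul_eq_mul, mul_assoc] } with hφ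
  have hker : LinearMap.ker φ ≠ ⊥ := by
    intro h
    have hinj : Function.Injective φ := LinearMap.ker_eq_bot.1 h
    have := LinearMap.finrank_le_finrank_of_injective hinj
    rw [Module.finrank_pi, Module.finrank_pi] at this
    simp [Fintype.card_fin] at this
    omega
  obtain ⟨x, hxker, hx0⟩ := (Submodule.ne_bot_iff _).1 hker
  refine ⟨x, hx0, fun j hj => ?_⟩
  have hj' : (j : ℕ) < k - 1 := hj
  have := congrFun (LinearMap.mem_ker.1 hxker) ⟨(j : ℕ), hj'⟩
  rw [vecMul_moore]
  have hgj : g (Fin.castLE hle ⟨(j : ℕ), hj'⟩) = g j := rfl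
  simpa [hφ, hgj] using this

end aux

theorem gk_min_rank_distance_case2
    (q m n1 k1 n2 k2 : ℕ)
    (K L : Type*) [Field K] [Fintype K] [Field L] [Algebra K L]
    (hq : Fintype.card K = q) (hm : Module.finrank K L = m)
    (hk1pos : 1 ≤ k1) (hk1n1 : k1 ≤ n1)
    (hk2pos : 1 ≤ k2) (hk2n2 : k2 ≤ n2)
    (hnm : n1 * n2 ≤ m) (hd : n1 - k1 ≤ n2 - k2)
    (g1 : Fin n1 → L) (hg1 : rankWeight K g1 = n1)
    (g2 : Fin n2 → L) (hg2 : rankWeight K g2 = n2) :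
    (∀ c : Fin n1 × Fin n2 → L,
      (∃ x : Fin k1 × Fin k2 → L, c = x ᵥ* (moore q g1 k1 ⊗ₖ moore q g2 k2)) →
      c ≠ 0 → n2 - k2 + 1 ≤ rankWeight K c) ∧
    ∃ c : Fin n1 × Fin n2 → L,
      (∃ x : Fin k1 × Fin k2 → L, c = x ᵥ* (moore q g1 k1 ⊗ₖ moore q g2 k2)) ∧
      c ≠ 0 ∧ rankWeight K c ≤ (n1 - k1 + 1) * (n2 - k2 + 1) := by
  classical
  subst hq
  subst hm
  haveI : FiniteDimensional K L :=
    Module.finite_of_finrank_pos (lt_of_lt_of_le (Nat.mul_pos (by omega) (by omega)) hnm)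
  set V1 := Submodule.span K (Set.range g1) with hV1def
  set V2 := Submodule.span K (Set.range g2) with hV2def
  have hV1 : Module.finrank K V1 = n1 := hg1
  have hV2 : Module.finrank K V2 = n2 := hg2
  constructor
  · rintro c ⟨x, rfl⟩ hc0
    have hx : x ≠ 0 := by
      rintro rfl
      exact hc0 (Matrix.zero_vecMul _)
    obtain ⟨⟨i1s, i2s⟩, hxi'⟩ := Function.ne_iff.1 hx
    have hxi : x (i1s, i2s) ≠ 0 := by simpa using hxi'
    have hcol : (fun i1 => x (i1, i2s)) ≠ 0 := fun h => hxi (congrFun h i1s)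
    obtain ⟨a0, ha0V, ha0⟩ := qLin_exists_ne_zero (K := K) _ hcol V1 (by rw [hV1]; exact hk1n1)
    set y : Fin k2 → L :=
      fun i2 => ∑ i1 : Fin k1, x (i1, i2) * a0 ^ Fintype.card K ^ (i1 : ℕ) with hydef
    have hy : y ≠ 0 := by
      intro h
      exact ha0 (by simpa [qLin_apply] using congrFun h i2s)
    set F : L → L → L := fun a b => ∑ i1 : Fin k1, ∑ i2 : Fin k2,
      x (i1, i2) * (a ^ Fintype.card K ^ (i1 : ℕ) * b ^ Fintype.card K ^ (i2 : ℕ)) with hFdef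
    have hqne : ∀ i : ℕ, Fintype.card K ^ i ≠ 0 := fun i => (Nat.pow_pos Fintype.card_pos).ne'
    set spanC := Submodule.span K
      (Set.range (x ᵥ* (moore (Fintype.card K) g1 k1 ⊗ₖ moore (Fintype.card K) g2 k2))) with hspanCdef
    have hF_c : ∀ (j1 : Fin n1) (j2 : Fin n2), F (g1 j1) (g2 j2)
        = (x ᵥ* (moore (Fintype.card K) g1 k1 ⊗ₖ moore (Fintype.card K) g2 k2)) (j1, j2) :=
      fun j1 j2 => (vecMul_kron g1 g2 x j1 j2 _).symm
    have hF_addl : ∀ a a' b : L, F (a + a') b = F a b + F a' b := by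
      intro a a' b
      simp [hFdef, frob_add, add_mul, mul_add, Finset.sum_add_distrib]
    have hF_smull : ∀ (cc : K) (a b : L), F (cc • a) b = cc • F a b := by
      intro cc a b
      simp [hFdef, frob_smul, smul_mul_assoc, mul_smul_comm, Finset.smul_sum]
    have hF_zerol : ∀ b : L, F 0 b = 0 := by
      intro b
      simp [hFdef, zero_pow (hqne _)]
    have hF_addr : ∀ a b b' : L, F a (b + b') = F a b + F a b' := by
      intro a b b'
      simp [hFdef, frob_add, mul_add, Finset.sum_add_distrib]
    have hF_smulr : ∀ (cc : K) (a b : L), F a (cc • b) = cc • F a b := by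
      intro cc a b
      simp [hFdef, frob_smul, smul_mul_assoc, mul_smul_comm, Finset.smul_sum]
    have hF_zeror : ∀ a : L, F a 0 = 0 := by
      intro a
      simp [hFdef, zero_pow (hqne _)]
    have hFy : ∀ b : L, F a0 b = qLin (K := K) y b := by
      intro b
      rw [qLin_apply]
      simp only [hydef, hFdef, Finset.sum_mul]
      rw [Finset.sum_comm]
      exact Finset.sum_congr rfl fun i1 _ => Finset.sum_congr rfl fun i2 _ => by ring
    have hgen : ∀ a ∈ V1, ∀ b ∈ V2, F a b ∈ spanC := by
      intro a ha
      refine Submodule.span_induction (p := fun a _ => ∀ b ∈ V2, F a b ∈ spanC)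
        ?_ ?_ ?_ ?_ ha
      · rintro _ ⟨j1, rfl⟩ b hb
        refine Submodule.span_induction (p := fun b _ => F (g1 j1) b ∈ spanC)
          ?_ ?_ ?_ ?_ hb
        · rintro _ ⟨j2, rfl⟩
          rw [hF_c]
          exact Submodule.subset_span ⟨(j1, j2), rfl⟩
        · show F (g1 j1) 0 ∈ spanC
          rw [hF_zeror]; exact zero_mem _
        · intro u v _ _ hu hv
          rw [hF_addr]; exact add_mem hu hv
        · intro cc u _ hu
          rw [hF_smulr]; exact Submodule.smul_mem _ _ hu
      · intro b hb
        show F 0 b ∈ spanC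
        rw [hF_zerol]; exact zero_mem _
      · intro u v _ _ hu hv b hb
        rw [hF_addl]; exact add_mem (hu b hb) (hv b hb)
      · intro cc u _ hu b hb
        rw [hF_smull]; exact Submodule.smul_mem _ _ (hu b hb)
    have hmaple : V2.map (qLin (K := K) y) ≤ spanC := by
      rintro _ ⟨b, hb, rfl⟩
      rw [← hFy]
      exact hgen a0 ha0V b hb
    have h1 := qLin_map_finrank (K := K) y hy V2
    rw [hV2] at h1
    have h2 := Submodule.finrank_mono hmaple
    have h3 : rankWeight K
        (x ᵥ* (moore (Fintype.card K) g1 k1 ⊗ₖ moore (Fintype.card K) g2 k2))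
        = Module.finrank K spanC := rfl
    omega
  · obtain ⟨x1, hx10, hx1z⟩ := moore_exists_low_weight (K := K) hk1pos hk1n1 g1
    obtain ⟨x2, hx20, hx2z⟩ := moore_exists_low_weight (K := K) hk2pos hk2n2 g2
    set c1 : Fin n1 → L := x1 ᵥ* moore (Fintype.card K) g1 k1 with hc1
    set c2 : Fin n2 → L := x2 ᵥ* moore (Fintype.card K) g2 k2 with hc2
    have hker1 : ∀ j : Fin n1, c1 j = qLin (K := K) x1 (g1 j) := by
      intro j; rw [hc1, vecMul_moore, qLin_apply]
    have hker2 : ∀ j : Fin n2, c2 j = qLin (K := K) x2 (g2 j) := by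
      intro j; rw [hc2, vecMul_moore, qLin_apply]
    have hc1ne : c1 ≠ 0 := by
      intro h
      obtain ⟨a, haV, ha⟩ := qLin_exists_ne_zero (K := K) x1 hx10 V1 (by rw [hV1]; exact hk1n1)
      refine ha ?_
      have hle : V1 ≤ LinearMap.ker (qLin (K := K) x1) := by
        rw [hV1def, Submodule.span_le]
        rintro _ ⟨j, rfl⟩
        have := congrFun h j
        rw [hker1 j] at this
        simpa using this
      exact LinearMap.mem_ker.1 (hle haV)
    have hc2ne : c2 ≠ 0 := by
      intro h
      obtain ⟨a, haV, ha⟩ := qLin_exists_ne_zero (K := K) x2 hx20 V2 (by rw [hV2]; exact hk2n2)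
      refine ha ?_
      have hle : V2 ≤ LinearMap.ker (qLin (K := K) x2) := by
        rw [hV2def, Submodule.span_le]
        rintro _ ⟨j, rfl⟩
        have := congrFun h j
        rw [hker2 j] at this
        simpa using this
      exact LinearMap.mem_ker.1 (hle haV)
    refine ⟨fun jj => c1 jj.1 * c2 jj.2, ⟨fun ii => x1 ii.1 * x2 ii.2, ?_⟩, ?_, ?_⟩
    · funext jj
      obtain ⟨j1, j2⟩ := jj
      rw [vecMul_kron, hc1, hc2, vecMul_moore, vecMul_moore, Finset.sum_mul_sum]
      exact Finset.sum_congr rfl fun i1 _ => Finset.sum_congr rfl fun i2 _ => by ring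
    · obtain ⟨j1, h1⟩ := Function.ne_iff.1 hc1ne
      obtain ⟨j2, h2⟩ := Function.ne_iff.1 hc2ne
      intro h
      exact (mul_ne_zero (by simpa using h1) (by simpa using h2)) (by simpa using congrFun h (j1, j2))
    · set t1 : Finset (Fin n1) := Finset.univ.filter (fun j => k1 - 1 ≤ (j : ℕ)) with ht1
      set t2 : Finset (Fin n2) := Finset.univ.filter (fun j => k2 - 1 ≤ (j : ℕ)) with ht2
      set T : Finset L := (t1 ×ˢ t2).image (fun p => c1 p.1 * c2 p.2) with hT
      have hspan : Submodule.span K (Set.range (fun jj : Fin n1 × Fin n2 => c1 jj.1 * c2 jj.2))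
          ≤ Submodule.span K (T : Set L) := by
        rw [Submodule.span_le]
        rintro _ ⟨⟨j1, j2⟩, rfl⟩
        by_cases h1 : k1 - 1 ≤ (j1 : ℕ)
        · by_cases h2 : k2 - 1 ≤ (j2 : ℕ)
          · refine Submodule.subset_span ?_
            refine Finset.mem_coe.2 (Finset.mem_image.2 ⟨(j1, j2), ?_, rfl⟩)
            exact Finset.mem_product.2 ⟨by simp only [ht1, Finset.mem_filter]; exact ⟨Finset.mem_univ _, h1⟩, by simp only [ht2, Finset.mem_filter]; exact ⟨Finset.mem_univ _, h2⟩⟩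
          · have hz : c2 j2 = 0 := hx2z j2 (by omega)
            simp only [hz, mul_zero]
            exact Submodule.zero_mem _
        · have hz : c1 j1 = 0 := hx1z j1 (by omega)
          simp only [hz, zero_mul]
          exact Submodule.zero_mem _
      have hrank : rankWeight K (fun jj : Fin n1 × Fin n2 => c1 jj.1 * c2 jj.2) ≤ T.card :=
        le_trans (Submodule.finrank_mono hspan) (finrank_span_finset_le_card T)
      refine le_trans hrank ?_
      refine le_trans Finset.card_image_le ?_
      rw [Finset.card_product]
      have hcard1 : t1.card ≤ n1 - k1 + 1 := by
        have hmap := Finset.card_le_card_of_injOn (s := t1) (t := Finset.univ)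
          (fun j : Fin n1 => (⟨(j : ℕ) - (k1 - 1), by have := j.isLt; omega⟩ : Fin (n1 - k1 + 1)))
          (fun j _ => Finset.mem_univ _) ?_
        · simpa using hmap
        · intro a ha b hb hab
          rw [ht1, Finset.coe_filter] at ha hb
          simp only [Set.mem_setOf_eq] at ha hb
          have hv : (a : ℕ) - (k1 - 1) = (b : ℕ) - (k1 - 1) := congrArg Fin.val hab
          exact Fin.ext (by omega)
      have hcard2 : t2.card ≤ n2 - k2 + 1 := by
        have hmap := Finset.card_le_card_of_injOn (s := t2) (t := Finset.univ)
          (fun j : Fin n2 => (⟨(j : ℕ) - (k2 - 1), by have := j.isLt; omega⟩ : Fin (n2 - k2 + 1)))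
          (fun j _ => Finset.mem_univ _) ?_
        · simpa using hmap
        · intro a ha b hb hab
          rw [ht2, Finset.coe_filter] at ha hb
          simp only [Set.mem_setOf_eq] at ha hb
          have hv : (a : ℕ) - (k2 - 1) = (b : ℕ) - (k2 - 1) := congrArg Fin.val hab
          exact Fin.ext (by omega)
      exact Nat.mul_le_mul hcard1 hcard2
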